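/- Let a, v, b ∈ [0,1]^N with a ≼ v ≼ b componentwise, and suppose v_i > 0 for all i. Fix an item i ∈ [N] and define g ∈ [0,1]^N by g_j = a_j for j ≠ i and g_i = b_i. Then for every θ ∈ [0,1], if i ∈ Top([N], v, θ) then i ∈ Top([N], g, θ). -/

import Mathlib

/-- The expected reward `R(S, v)` of an assortment `S`. -/
noncomputable def Rew {N : ℕ} (r v : Fin N → ℝ) (S : Finset (Fin N)) : ℝ :=
  (∑ i ∈ S, r i * v i) / (1 + ∑ i ∈ S, v i)

/-- `θ_v`: the optimal expected reward over assortments of size at most `K`. -/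
noncomputable def thetaOpt (N K : ℕ) (r v : Fin N → ℝ) : ℝ :=
  ((Finset.univ : Finset (Fin N)).powerset.filter (fun S => S.card ≤ K)).sup'
    ⟨∅, by simp⟩ (Rew r v)

/- `Top([N], w, θ)`: take the `min {K, N}` items `i` with the largest values
`(r i − θ) * w i` (ties broken in favor of smaller index), then remove all items
with `r i − θ ≤ 0`. -/
open Classical in
noncomputable def TopSet (N K : ℕ) (r w : Fin N → ℝ) (θ : ℝ) : Finset (Fin N) :=
  ((List.insertionSort (fun i j =>
      (r j - θ) * w j < (r i - θ) * w i ∨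
      ((r i - θ) * w i = (r j - θ) * w j ∧ i ≤ j)) (List.finRange N)).take
    (min K N)).toFinset.filter (fun i => θ < r i)

open Classical in
lemma mem_take_sorted {α : Type*} (rel : α → α → Prop) [DecidableRel rel]
    (hanti : ∀ x y, rel x y → rel y x → x = y) (i : α) (hrefl : rel i i) :
    ∀ l : List α, l.Pairwise rel → l.Nodup → i ∈ l →
      ∀ m, (i ∈ l.take m ↔ l.countP (fun j => decide (¬ rel i j)) < m) := by
  intro l
  induction l with
  | nil => simp
  | cons x t ih =>
    intro hp hn hi m
    rw [List.pairwise_cons] at hp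
    rw [List.nodup_cons] at hn
    rcases eq_or_ne i x with rfl | hne
    · have hc : (i :: t).countP (fun j => decide (¬ rel i j)) = 0 := by
        rw [List.countP_eq_zero]
        intro j hj
        rcases List.mem_cons.mp hj with rfl | hj'
        · simp [hrefl]
        · simp [hp.1 j hj']
      rw [hc]
      cases m with
      | zero => simp
      | succ m => simp [List.take_succ_cons]
    · have hit : i ∈ t := by
        rcases List.mem_cons.mp hi with h | h
        · exact absurd h hne
        · exact h
      have hnr : ¬ rel i x := fun h => hne (hanti i x h (hp.1 i hit))
      have hc : (x :: t).countP (fun j => decide (¬ rel i j)) =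
          t.countP (fun j => decide (¬ rel i j)) + 1 := by
        rw [List.countP_cons]
        simp [hnr]
      rw [hc]
      cases m with
      | zero => simp
      | succ m =>
        rw [List.take_succ_cons, List.mem_cons]
        simp only [hne, false_or, Nat.add_lt_add_iff_right]
        exact ih hp.2 hn.2 hit m


/-- If `a ≼ v ≼ b` and `g` agrees with `a` everywhere except `g i = b i`, then
for every `θ ∈ [0,1]`: `i ∈ Top([N], v, θ)` implies `i ∈ Top([N], g, θ)`. -/
theorem stmt9 (N K : ℕ) (hK : 1 ≤ K) (hKN : K ≤ N) (r a v b : Fin N → ℝ)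
    (hr : ∀ j, 0 < r j ∧ r j ≤ 1)
    (ha : ∀ j, 0 ≤ a j ∧ a j ≤ 1) (hv : ∀ j, 0 < v j ∧ v j ≤ 1)
    (hb : ∀ j, 0 ≤ b j ∧ b j ≤ 1)
    (hav : ∀ j, a j ≤ v j) (hvb : ∀ j, v j ≤ b j)
    (i : Fin N) (θ : ℝ) (hθ : 0 ≤ θ ∧ θ ≤ 1) :
    i ∈ TopSet N K r v θ → i ∈ TopSet N K r (Function.update a i (b i)) θ := by
  classical
  intro hmem
  set g := Function.update a i (b i) with hg
  simp only [TopSet, Finset.mem_filter, List.mem_toFinset] at hmem ⊢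
  obtain ⟨htake, hri⟩ := hmem
  refine ⟨?_, hri⟩
  -- abbreviations
  set relv : Fin N → Fin N → Prop := fun p q =>
      (r q - θ) * v q < (r p - θ) * v p ∨
      ((r p - θ) * v p = (r q - θ) * v q ∧ p ≤ q) with hrelv
  set relg : Fin N → Fin N → Prop := fun p q =>
      (r q - θ) * g q < (r p - θ) * g p ∨
      ((r p - θ) * g p = (r q - θ) * g q ∧ p ≤ q) with hrelg
  have hanti : ∀ (w : Fin N → ℝ) (x y : Fin N),
      ((r y - θ) * w y < (r x - θ) * w x ∨
        ((r x - θ) * w x = (r y - θ) * w y ∧ x ≤ y)) →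
      ((r x - θ) * w x < (r y - θ) * w y ∨
        ((r y - θ) * w y = (r x - θ) * w x ∧ y ≤ x)) → x = y := by
    intro w x y h1 h2
    rcases h1 with h1 | ⟨h1, h1'⟩ <;> rcases h2 with h2 | ⟨h2, h2'⟩ <;>
      first
        | exact absurd h1 (by linarith)
        | exact le_antisymm h1' h2'
  have htotal : ∀ (w : Fin N → ℝ) (x y : Fin N),
      ((r y - θ) * w y < (r x - θ) * w x ∨
        ((r x - θ) * w x = (r y - θ) * w y ∧ x ≤ y)) ∨
      ((r x - θ) * w x < (r y - θ) * w y ∨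
        ((r y - θ) * w y = (r x - θ) * w x ∧ y ≤ x)) := by
    intro w x y
    rcases lt_trichotomy ((r y - θ) * w y) ((r x - θ) * w x) with h | h | h
    · exact Or.inl (Or.inl h)
    · rcases le_total x y with h' | h'
      · exact Or.inl (Or.inr ⟨h.symm, h'⟩)
      · exact Or.inr (Or.inr ⟨h, h'⟩)
    · exact Or.inr (Or.inl h)
  -- sorted list facts
  have key : ∀ (w : Fin N → ℝ) (rel : Fin N → Fin N → Prop)
      (hrel : rel = fun p q => (r q - θ) * w q < (r p - θ) * w p ∨
        ((r p - θ) * w p = (r q - θ) * w q ∧ p ≤ q)) [DecidableRel rel] (m : ℕ),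
      (i ∈ (List.insertionSort rel (List.finRange N)).take m ↔
        (List.finRange N).countP (fun j => decide (¬ rel i j)) < m) := by
    intro w rel hrel _ m
    haveI : IsTotal (Fin N) rel := ⟨by subst hrel; exact htotal w⟩
    haveI : IsTrans (Fin N) rel := ⟨by
      subst hrel
      intro x y z h1 h2
      rcases h1 with h1 | ⟨h1, h1'⟩ <;> rcases h2 with h2 | ⟨h2, h2'⟩
      · exact Or.inl (by linarith)
      · exact Or.inl (by linarith)
      · exact Or.inl (by linarith)
      · exact Or.inr ⟨by linarith, le_trans h1' h2'⟩⟩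
    have hperm := List.perm_insertionSort rel (List.finRange N)
    rw [mem_take_sorted rel (by subst hrel; exact hanti w) i
        (by subst hrel; exact Or.inr ⟨rfl, le_refl i⟩)
        _ (List.pairwise_insertionSort rel (List.finRange N))
        (hperm.nodup_iff.mpr (List.nodup_finRange N))
        (hperm.mem_iff.mpr (List.mem_finRange i)) m]
    rw [hperm.countP_eq]
  rw [key v relv hrelv (min K N)] at htake
  rw [key g relg hrelg (min K N)]
  refine lt_of_le_of_lt (List.countP_mono_left ?_) htake
  intro j _ hj
  simp only [decide_eq_true_eq] at hj ⊢
  intro hvij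
  apply hj
  -- show relv i j → relg i j
  rcases eq_or_ne j i with rfl | hji
  · exact Or.inr ⟨rfl, le_refl j⟩
  have hgj : g j = a j := Function.update_of_ne hji _ _
  have hgi : g i = b i := Function.update_self _ _ _
  have hriθ : 0 < r i - θ := by linarith
  have hkeyi : (r i - θ) * v i ≤ (r i - θ) * g i := by
    rw [hgi]; exact mul_le_mul_of_nonneg_left (hvb i) hriθ.le
  rcases le_or_gt (r j) θ with hj2 | hj2
  · -- key_g j ≤ 0 < key_g i
    have h1 : (r j - θ) * g j ≤ 0 := by
      rw [hgj]; exact mul_nonpos_of_nonpos_of_nonneg (by linarith) (ha j).1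
    have h2 : 0 < (r i - θ) * v i := mul_pos hriθ (hv i).1
    exact Or.inl (by linarith)
  · have hkeyj : (r j - θ) * g j ≤ (r j - θ) * v j := by
      rw [hgj]; exact mul_le_mul_of_nonneg_left (hav j) (by linarith)
    simp only [hrelv] at hvij
    simp only [hrelg]
    rcases hvij with h | ⟨h, h'⟩
    · exact Or.inl (by linarith)
    · rcases lt_or_eq_of_le (show (r j - θ) * g j ≤ (r i - θ) * g i by linarith) with
        h2 | h2
      · exact Or.inl h2
      · exact Or.inr ⟨h2.symm, h'⟩
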